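/- If μ < 0, then for V̂ defined on (0,κ+c) as above, V̂'((κ+c)-) = -λ/(λ-μ) + (μ/(λ-μ))(√(ν²+2λ/σ²)-ν) < -1, i.e. the left derivative at κ+c is strictly less than -1. -/

import Mathlib

open Real Set

theorem stmt_15 (μ σ lam κ c : ℝ) (hμ : μ < 0) (hσ : 0 < σ) (hlam : 0 < lam)
    (hκ : 0 < κ) (hc : 0 ≤ c)
    (ν : ℝ) (hν : ν = μ / σ ^ 2 - 1 / 2)
    (ψ V : ℝ → ℝ)
    (hψ : ∀ x : ℝ, ψ x = x ^ (Real.sqrt (ν ^ 2 + 2 * lam / σ ^ 2) - ν))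
    (hV : ∀ x : ℝ, V x = κ - lam * x / (lam - μ)
        + (μ * (κ + c) / (lam - μ)) * (ψ x / ψ (κ + c))) :
    HasDerivWithinAt V
      (-(lam / (lam - μ)) + (μ / (lam - μ)) * (Real.sqrt (ν ^ 2 + 2 * lam / σ ^ 2) - ν))
      (Set.Iio (κ + c)) (κ + c) ∧
    -(lam / (lam - μ)) + (μ / (lam - μ)) * (Real.sqrt (ν ^ 2 + 2 * lam / σ ^ 2) - ν) < -1 := by
  set r := Real.sqrt (ν ^ 2 + 2 * lam / σ ^ 2) with hr
  set s := r - ν with hsdef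
  set a := κ + c with hadef
  have ha : 0 < a := by positivity
  have hlm : 0 < lam - μ := by linarith
  have hVeq : V = fun x => κ - lam * x / (lam - μ) + (μ * a / (lam - μ)) * (x ^ s / a ^ s) := by
    funext x
    rw [hV, hψ, hψ]
  -- derivative part
  have hδ : HasDerivAt V
      (-(lam / (lam - μ)) + (μ / (lam - μ)) * s) a := by
    rw [hVeq]
    have h1 : HasDerivAt (fun x : ℝ => x ^ s) (s * a ^ (s - 1)) a :=
      Real.hasDerivAt_rpow_const (Or.inl ha.ne')
    have h2 := (h1.div_const (a ^ s)).const_mul (μ * a / (lam - μ))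
    have h3 : HasDerivAt (fun x : ℝ => κ - lam * x / (lam - μ)) (-(lam / (lam - μ))) a := by
      have := (((hasDerivAt_id a).const_mul lam).div_const (lam - μ)).const_sub κ
      simpa using this
    have h4 := h3.add h2
    convert h4 using 1
    · rfl
    · rfl
    · rfl
    have has : a ^ (s - 1) = a ^ s / a := Real.rpow_sub_one ha.ne' s
    have haspos : (0 : ℝ) < a ^ s := Real.rpow_pos_of_pos ha s
    rw [has]
    field_simp
  -- inequality part
  have harg : 0 ≤ ν ^ 2 + 2 * lam / σ ^ 2 := by positivity
  have hr2 : r ^ 2 = ν ^ 2 + 2 * lam / σ ^ 2 := Real.sq_sqrt harg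
  have hrpos : 0 < r := Real.sqrt_pos.mpr (by positivity)
  have hs1 : 1 < s := by
    rcases le_or_gt (1 + ν) 0 with h | h
    · simp only [hsdef]; linarith
    · have hsq : (1 + ν) ^ 2 < r ^ 2 := by
        rw [hr2, hν]
        have hμσ : μ / σ ^ 2 < 0 := div_neg_of_neg_of_pos hμ (by positivity)
        have hls : 0 < lam / σ ^ 2 := by positivity
        have h2 : 2 * lam / σ ^ 2 = 2 * (lam / σ ^ 2) := by ring
        rw [h2]; nlinarith
      have : 1 + ν < r := by nlinarith
      simp only [hsdef]; linarith
  have hineq : -(lam / (lam - μ)) + (μ / (lam - μ)) * s < -1 := by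
    have key : -lam + μ * s < -1 * (lam - μ) := by nlinarith
    have heq : -(lam / (lam - μ)) + (μ / (lam - μ)) * s = (-lam + μ * s) / (lam - μ) := by
      ring
    rw [heq, div_lt_iff₀ hlm]
    linarith
  exact ⟨hδ.hasDerivWithinAt, hineq⟩
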